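/- arXiv:0803.4206 — 2 statements merged into one kernel-verified Lean document; each statement's English description precedes it below -/
import Mathlib

section
/- (Product rule for affine semidefinite programs with positive semidefinite objective; dual form of Theorem 1, item 1.) For i ∈ {1,2}, let J_i be a positive semidefinite real matrix, let A_{i,1},…,A_{i,m_i} be real matrices of the same size as J_i, and let b_i ∈ ℝ^{m_i}. Suppose y_i ∈ ℝ^{m_i} satisfies Σ_j y_i[j]·A_{i,j} − J_i ⪰ 0 for i ∈ {1,2}. Then Σ_{j,j'} y_1[j]·y_2[j']·(A_{1,j} ⊗ A_{2,j'}) − J_1 ⊗ J_2 is positive semidefinite; consequently, for every positive semidefinite X with (A_{1,j} ⊗ A_{2,j'}) • X = b_1[j]·b_2[j'] for all j,j', one has (J_1 ⊗ J_2) • X ≤ (y_1ᵀb_1)·(y_2ᵀb_2). -/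
open Matrix Kronecker BigOperators

/-- Frobenius inner product of two real matrices. -/
def frob {α β : Type*} [Fintype α] [Fintype β] (A X : Matrix α β ℝ) : ℝ :=
  ∑ i, ∑ j, A i j * X i j

theorem Matrix.posSemidef_iff_eq_transpose_mul_self {n : Type*} [Fintype n] [DecidableEq n]
    {A : Matrix n n ℝ} : A.PosSemidef ↔ ∃ B : Matrix n n ℝ, A = Bᴴ * B := by
  open scoped MatrixOrder in
  constructor
  · intro hA
    obtain ⟨X, hX, -, hXA⟩ :=
      CFC.exists_sqrt_of_isSelfAdjoint_of_quasispectrumRestricts hA.isHermitian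
        (QuasispectrumRestricts.nnreal_of_nonneg hA.nonneg)
    exact ⟨X, by rw [← Matrix.star_eq_conjTranspose, hX.star_eq, hXA]⟩
  · rintro ⟨B, rfl⟩
    exact Matrix.posSemidef_conjTranspose_mul_self B

lemma psd_kron {n1 n2 : Type*} [Fintype n1] [Fintype n2] [DecidableEq n1] [DecidableEq n2]
    {A : Matrix n1 n1 ℝ} {B : Matrix n2 n2 ℝ} (hA : A.PosSemidef) (hB : B.PosSemidef) :
    (A ⊗ₖ B).PosSemidef := by
  obtain ⟨C, rfl⟩ := Matrix.posSemidef_iff_eq_transpose_mul_self.mp hA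
  obtain ⟨D, rfl⟩ := Matrix.posSemidef_iff_eq_transpose_mul_self.mp hB
  rw [Matrix.mul_kronecker_mul]
  have : (Cᴴ ⊗ₖ Dᴴ) = (C ⊗ₖ D)ᴴ := by
    ext ⟨i, j⟩ ⟨k, l⟩
    simp [Matrix.kroneckerMap_apply, Matrix.conjTranspose_apply]
  rw [this]
  exact Matrix.posSemidef_conjTranspose_mul_self _

lemma frob_nonneg {n : Type*} [Fintype n] [DecidableEq n]
    {A X : Matrix n n ℝ} (hA : A.PosSemidef) (hX : X.PosSemidef) : 0 ≤ frob A X := by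
  obtain ⟨B, rfl⟩ := Matrix.posSemidef_iff_eq_transpose_mul_self.mp hA
  have : frob (Bᴴ * B) X = ∑ k, dotProduct (B k) (X *ᵥ B k) := by
    calc frob (Bᴴ * B) X = ∑ i, ∑ j, ∑ k, B k i * B k j * X i j := by
          simp [frob, Matrix.mul_apply, Finset.sum_mul]
      _ = ∑ k, ∑ i, ∑ j, B k i * B k j * X i j := by
          rw [Finset.sum_congr rfl fun i _ => Finset.sum_comm, Finset.sum_comm]
      _ = ∑ k, dotProduct (B k) (X *ᵥ B k) := by
          apply Finset.sum_congr rfl; intro k _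
          simp only [dotProduct, Matrix.mulVec, dotProduct, Finset.mul_sum]
          apply Finset.sum_congr rfl; intro i _
          apply Finset.sum_congr rfl; intro j _
          ring
  rw [this]
  exact Finset.sum_nonneg fun k _ => by simpa using hX.dotProduct_mulVec_nonneg (B k)

lemma frob_add {α β : Type*} [Fintype α] [Fintype β] (A B X : Matrix α β ℝ) :
    frob (A + B) X = frob A X + frob B X := by
  simp [frob, add_mul, Finset.sum_add_distrib]

lemma frob_sub {α β : Type*} [Fintype α] [Fintype β] (A B X : Matrix α β ℝ) :
    frob (A - B) X = frob A X - frob B X := by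
  simp [frob, sub_mul, Finset.sum_sub_distrib]

lemma frob_smul {α β : Type*} [Fintype α] [Fintype β] (c : ℝ) (A X : Matrix α β ℝ) :
    frob (c • A) X = c * frob A X := by
  simp [frob, Finset.mul_sum, mul_assoc]

lemma frob_sum {α β ι : Type*} [Fintype α] [Fintype β] (s : Finset ι)
    (f : ι → Matrix α β ℝ) (X : Matrix α β ℝ) :
    frob (∑ j ∈ s, f j) X = ∑ j ∈ s, frob (f j) X := by
  induction s using Finset.cons_induction with
  | empty => simp [frob]
  | cons a s ha ih => simp [Finset.sum_cons, frob_add, ih]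

theorem stmt_6 {n1 n2 : Type*} [Fintype n1] [Fintype n2] [DecidableEq n1] [DecidableEq n2]
    {m1 m2 : ℕ}
    (J1 : Matrix n1 n1 ℝ) (J2 : Matrix n2 n2 ℝ)
    (hJ1 : J1.PosSemidef) (hJ2 : J2.PosSemidef)
    (A1 : Fin m1 → Matrix n1 n1 ℝ) (A2 : Fin m2 → Matrix n2 n2 ℝ)
    (b1 : Fin m1 → ℝ) (b2 : Fin m2 → ℝ)
    (y1 : Fin m1 → ℝ) (y2 : Fin m2 → ℝ)
    (h1 : ((∑ j, y1 j • A1 j) - J1).PosSemidef)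
    (h2 : ((∑ j, y2 j • A2 j) - J2).PosSemidef) :
    ((∑ j, ∑ j', (y1 j * y2 j') • (A1 j ⊗ₖ A2 j')) - J1 ⊗ₖ J2).PosSemidef ∧
    ∀ X : Matrix (n1 × n2) (n1 × n2) ℝ, X.PosSemidef →
      (∀ j j', frob (A1 j ⊗ₖ A2 j') X = b1 j * b2 j') →
      frob (J1 ⊗ₖ J2) X ≤ (∑ j, y1 j * b1 j) * (∑ j, y2 j * b2 j) := by
  set S1 := ∑ j, y1 j • A1 j with hS1
  set S2 := ∑ j, y2 j • A2 j with hS2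
  have key : (∑ j, ∑ j', (y1 j * y2 j') • (A1 j ⊗ₖ A2 j')) = S1 ⊗ₖ S2 := by
    ext ⟨i, k⟩ ⟨i', k'⟩
    simp only [Matrix.sum_apply, Matrix.smul_apply, Matrix.kroneckerMap_apply, hS1, hS2,
      smul_eq_mul, Finset.sum_mul, Finset.mul_sum]
    rw [Finset.sum_comm]
    apply Finset.sum_congr rfl; intros
    apply Finset.sum_congr rfl; intros
    ring
  have hS2psd : S2.PosSemidef := by
    have := h2.add hJ2
    simpa using this
  have split : S1 ⊗ₖ S2 - J1 ⊗ₖ J2 = ((S1 - J1) ⊗ₖ S2) + (J1 ⊗ₖ (S2 - J2)) := by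
    ext ⟨i, k⟩ ⟨i', k'⟩
    simp [Matrix.kroneckerMap_apply, Matrix.sub_apply, Matrix.add_apply]
    ring
  have hpsd : (S1 ⊗ₖ S2 - J1 ⊗ₖ J2).PosSemidef := by
    rw [split]
    exact (psd_kron h1 hS2psd).add (psd_kron hJ1 h2)
  refine ⟨key ▸ hpsd, fun X hX hfr => ?_⟩
  have h0 : 0 ≤ frob (S1 ⊗ₖ S2 - J1 ⊗ₖ J2) X := frob_nonneg hpsd hX
  rw [frob_sub] at h0
  have hval : frob (S1 ⊗ₖ S2) X = (∑ j, y1 j * b1 j) * (∑ j, y2 j * b2 j) := by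
    rw [← key, frob_sum]
    rw [Finset.sum_mul_sum]
    apply Finset.sum_congr rfl; intro j _
    rw [frob_sum]
    apply Finset.sum_congr rfl; intro j' _
    rw [frob_smul, hfr j j']
    ring
  linarith
end

section
/- (Product rule with inequality constraints.) Let the row/column index set be partitioned into two blocks S ∪ T. For i ∈ {1,2}, let J_i and B_{i,1},…,B_{i,k_i} be block anti-diagonal real matrices with J_i symmetric, let A_{i,1},…,A_{i,m_i} be block diagonal real matrices, and let b_i ∈ ℝ^{m_i}. Suppose: (a) there are non-negative vectors u_i with J_i = Σ_j u_i[j]·B_{i,j}; (b) there are entrywise non-negative vectors y_i ∈ ℝ^{m_i} and z_i ∈ ℝ^{k_i} with Σ_j y_i[j]·A_{i,j} − (Σ_j z_i[j]·B_{i,j} + J_i) ⪰ 0. Then for every positive semidefinite matrix X satisfying (A_{1,j} ⊗ A_{2,j'}) • X ≤ b_1[j]·b_2[j'] for all j,j' and (B_{1,j} ⊗ B_{2,j'}) • X ≥ 0 for all j,j', one has (J_1 ⊗ J_2) • X ≤ (y_1ᵀb_1)·(y_2ᵀb_2). -/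
open Matrix Kronecker BigOperators

section helpers
variable {α β : Type*} [Fintype α] [Fintype β]
open scoped MatrixOrder

lemma frob_add_left (A B X : Matrix α β ℝ) : frob (A + B) X = frob A X + frob B X := by
  simp [frob, add_mul, Finset.sum_add_distrib]

lemma frob_sub_left (A B X : Matrix α β ℝ) : frob (A - B) X = frob A X - frob B X := by
  simp [frob, sub_mul, Finset.sum_sub_distrib]

lemma frob_sum_left {ι : Type*} (s : Finset ι) (f : ι → Matrix α β ℝ) (X : Matrix α β ℝ) :
    frob (∑ i ∈ s, f i) X = ∑ i ∈ s, frob (f i) X := by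
  classical
  induction s using Finset.induction with
  | empty => simp [frob]
  | insert _ _ h ih => rw [Finset.sum_insert h, Finset.sum_insert h, frob_add_left, ih]

lemma frob_smul_left (c : ℝ) (A X : Matrix α β ℝ) : frob (c • A) X = c * frob A X := by
  simp [frob, Finset.mul_sum, mul_assoc]

lemma frob_nonneg_of_posSemidef [DecidableEq α] {M X : Matrix α α ℝ}
    (hM : M.PosSemidef) (hX : X.PosSemidef) : 0 ≤ frob M X := by
  have hS : CFC.sqrt M * CFC.sqrt M = M := by rw [← pow_two]; exact CFC.sq_sqrt M hM.nonneg
  have hT : CFC.sqrt X * CFC.sqrt X = X := by rw [← pow_two]; exact CFC.sq_sqrt X hX.nonneg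
  set S := CFC.sqrt M with hSdef
  set T := CFC.sqrt X with hTdef
  have hSsymm : Sᵀ = S := by
    have := (CFC.sqrt_nonneg M).posSemidef.isHermitian
    rwa [Matrix.IsHermitian, conjTranspose_eq_transpose_of_trivial] at this
  have hTsymm : Tᵀ = T := by
    have := (CFC.sqrt_nonneg X).posSemidef.isHermitian
    rwa [Matrix.IsHermitian, conjTranspose_eq_transpose_of_trivial] at this
  have hfr : frob M X = Matrix.trace (M * Xᵀ) := by
    simp [frob, Matrix.trace, Matrix.mul_apply, Matrix.diag]
  have hXsymm : Xᵀ = X := by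
    have := hX.isHermitian
    rwa [Matrix.IsHermitian, conjTranspose_eq_transpose_of_trivial] at this
  rw [hfr, hXsymm, ← hS, ← hT]
  rw [Matrix.mul_assoc, Matrix.trace_mul_comm, Matrix.mul_assoc, Matrix.mul_assoc]
  have h2 : S * (T * (T * S)) = (T * S)ᵀ * (T * S) := by
    rw [Matrix.transpose_mul, hSsymm, hTsymm, Matrix.mul_assoc]
  rw [h2]
  have : Matrix.trace ((T * S)ᵀ * (T * S)) = ∑ i, ∑ j, (T * S) j i * (T * S) j i := by
    simp only [Matrix.trace, Matrix.diag, Matrix.mul_apply, Matrix.transpose_apply]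
  rw [this]
  exact Finset.sum_nonneg fun i _ => Finset.sum_nonneg fun j _ => mul_self_nonneg _

lemma posSemidef_kron [DecidableEq α] [DecidableEq β] {A : Matrix α α ℝ} {B : Matrix β β ℝ}
    (hA : A.PosSemidef) (hB : B.PosSemidef) : (A ⊗ₖ B).PosSemidef := by
  have hS : CFC.sqrt A * CFC.sqrt A = A := by rw [← pow_two]; exact CFC.sq_sqrt A hA.nonneg
  have hT : CFC.sqrt B * CFC.sqrt B = B := by rw [← pow_two]; exact CFC.sq_sqrt B hB.nonneg
  set S := CFC.sqrt A with hSdef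
  set T := CFC.sqrt B with hTdef
  have hSsymm : Sᵀ = S := by
    have := (CFC.sqrt_nonneg A).posSemidef.isHermitian
    rwa [Matrix.IsHermitian, conjTranspose_eq_transpose_of_trivial] at this
  have hTsymm : Tᵀ = T := by
    have := (CFC.sqrt_nonneg B).posSemidef.isHermitian
    rwa [Matrix.IsHermitian, conjTranspose_eq_transpose_of_trivial] at this
  have key : A ⊗ₖ B = (S ⊗ₖ T)ᴴ * (S ⊗ₖ T) := by
    have hherm : (S ⊗ₖ T)ᴴ = S ⊗ₖ T := by
      rw [conjTranspose_eq_transpose_of_trivial]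
      ext ⟨i, i'⟩ ⟨j, j'⟩
      simp only [Matrix.transpose_apply, Matrix.kroneckerMap_apply]
      rw [show S i j = S j i from congrFun (congrFun hSsymm j) i,
        show T i' j' = T j' i' from congrFun (congrFun hTsymm j') i']
    rw [← hS, ← hT, Matrix.mul_kronecker_mul, hherm]
  rw [key]
  exact Matrix.posSemidef_conjTranspose_mul_self _

lemma frob_kron_sum {n : Type*} [Fintype n] {k k' : ℕ} (w : Fin k → ℝ) (w' : Fin k' → ℝ)
    (P : Fin k → Matrix n n ℝ) (P' : Fin k' → Matrix n n ℝ) (X : Matrix (n × n) (n × n) ℝ) :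
    frob ((∑ j, w j • P j) ⊗ₖ (∑ j', w' j' • P' j')) X
      = ∑ j, ∑ j', (w j * w' j') * frob (P j ⊗ₖ P' j') X := by
  have hm : (∑ j, w j • P j) ⊗ₖ (∑ j', w' j' • P' j')
      = ∑ j, ∑ j', (w j * w' j') • (P j ⊗ₖ P' j') := by
    ext ⟨i, i'⟩ ⟨l, l'⟩
    simp only [Matrix.kroneckerMap_apply, Matrix.sum_apply, Matrix.smul_apply, smul_eq_mul]
    rw [Finset.sum_mul_sum]
    apply Finset.sum_congr rfl; intro a _; apply Finset.sum_congr rfl; intro b _; ring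
  rw [hm, frob_sum_left]
  apply Finset.sum_congr rfl; intro a _
  rw [frob_sum_left]
  apply Finset.sum_congr rfl; intro b _
  rw [frob_smul_left]

end helpers

theorem stmt_12 {n : Type*} [Fintype n] [DecidableEq n]
    (p : n → Bool)
    {k1 k2 m1 m2 : ℕ}
    (J1 J2 : Matrix n n ℝ)
    (B1 : Fin k1 → Matrix n n ℝ) (B2 : Fin k2 → Matrix n n ℝ)
    (A1 : Fin m1 → Matrix n n ℝ) (A2 : Fin m2 → Matrix n n ℝ)
    (b1 : Fin m1 → ℝ) (b2 : Fin m2 → ℝ)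
    (hJ1sym : J1.IsSymm) (hJ2sym : J2.IsSymm)
    (hJ1anti : ∀ i j, p i = p j → J1 i j = 0)
    (hJ2anti : ∀ i j, p i = p j → J2 i j = 0)
    (hB1anti : ∀ l i j, p i = p j → B1 l i j = 0)
    (hB2anti : ∀ l i j, p i = p j → B2 l i j = 0)
    (hA1diag : ∀ l i j, p i ≠ p j → A1 l i j = 0)
    (hA2diag : ∀ l i j, p i ≠ p j → A2 l i j = 0)
    (u1 : Fin k1 → ℝ) (u2 : Fin k2 → ℝ)
    (hu1 : ∀ j, 0 ≤ u1 j) (hu2 : ∀ j, 0 ≤ u2 j)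
    (hJ1span : J1 = ∑ j, u1 j • B1 j) (hJ2span : J2 = ∑ j, u2 j • B2 j)
    (y1 : Fin m1 → ℝ) (y2 : Fin m2 → ℝ)
    (hy1 : ∀ j, 0 ≤ y1 j) (hy2 : ∀ j, 0 ≤ y2 j)
    (z1 : Fin k1 → ℝ) (z2 : Fin k2 → ℝ)
    (hz1 : ∀ j, 0 ≤ z1 j) (hz2 : ∀ j, 0 ≤ z2 j)
    (h1 : ((∑ j, y1 j • A1 j) - ((∑ j, z1 j • B1 j) + J1)).PosSemidef)
    (h2 : ((∑ j, y2 j • A2 j) - ((∑ j, z2 j • B2 j) + J2)).PosSemidef)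
    (X : Matrix (n × n) (n × n) ℝ)
    (hX : X.PosSemidef)
    (hXA : ∀ j j', frob (A1 j ⊗ₖ A2 j') X ≤ b1 j * b2 j')
    (hXB : ∀ j j', 0 ≤ frob (B1 j ⊗ₖ B2 j') X) :
    frob (J1 ⊗ₖ J2) X ≤ (∑ j, y1 j * b1 j) * (∑ j, y2 j * b2 j) := by
  classical
  set a1 : Matrix n n ℝ := ∑ j, y1 j • A1 j with ha1def
  set c1 : Matrix n n ℝ := (∑ j, z1 j • B1 j) + J1 with hc1def
  set a2 : Matrix n n ℝ := ∑ j, y2 j • A2 j with ha2def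
  set c2 : Matrix n n ℝ := (∑ j, z2 j • B2 j) + J2 with hc2def
  have ha1 : ∀ i j, p i ≠ p j → a1 i j = 0 := by
    intro i j h
    simp [ha1def, Matrix.sum_apply, hA1diag _ _ _ h]
  have ha2 : ∀ i j, p i ≠ p j → a2 i j = 0 := by
    intro i j h
    simp [ha2def, Matrix.sum_apply, hA2diag _ _ _ h]
  have hc1 : ∀ i j, p i = p j → c1 i j = 0 := by
    intro i j h
    simp [hc1def, Matrix.sum_apply, Matrix.add_apply, hB1anti _ _ _ h, hJ1anti _ _ h]
  have hc2 : ∀ i j, p i = p j → c2 i j = 0 := by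
    intro i j h
    simp [hc2def, Matrix.sum_apply, Matrix.add_apply, hB2anti _ _ _ h, hJ2anti _ _ h]
  set d : n → ℝ := fun i => if p i then 1 else (-1) with hddef
  have hconj : (Matrix.diagonal d)ᴴ = Matrix.diagonal d := by
    rw [Matrix.diagonal_conjTranspose]
    congr 1
  have flip : ∀ (a c : Matrix n n ℝ), (∀ i j, p i ≠ p j → a i j = 0) →
      (∀ i j, p i = p j → c i j = 0) →
      Matrix.diagonal d * (a - c) * Matrix.diagonal d = a + c := by
    intro a c hA hC
    ext i j
    rw [Matrix.mul_diagonal, Matrix.diagonal_mul, Matrix.sub_apply, Matrix.add_apply]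
    by_cases h : p i = p j
    · rw [hC i j h]
      have hdij : d i = d j := by simp [hddef, h]
      have hdj : d j * d j = 1 := by by_cases hb : p j <;> simp [hddef, hb]
      rw [hdij]
      linear_combination a i j * hdj
    · rw [hA i j h]
      have hdij : d i * d j = -1 := by
        cases hpi : p i <;> cases hpj : p j <;> simp [hpi, hpj] at h ⊢ <;> simp [hddef, hpi, hpj]
      linear_combination (-(c i j)) * hdij
  have key1 : (a1 + c1).PosSemidef := by
    have hD := h1.mul_mul_conjTranspose_same (Matrix.diagonal d)
    rw [hconj, flip a1 c1 ha1 hc1] at hD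
    exact hD
  have key2 : (a2 + c2).PosSemidef := by
    have hD := h2.mul_mul_conjTranspose_same (Matrix.diagonal d)
    rw [hconj, flip a2 c2 ha2 hc2] at hD
    exact hD
  have hsum : 0 ≤ frob ((a1 + c1) ⊗ₖ (a2 - c2) + (a1 - c1) ⊗ₖ (a2 + c2)) X :=
    frob_nonneg_of_posSemidef ((posSemidef_kron key1 h2).add (posSemidef_kron h1 key2)) hX
  have hexp : (a1 + c1) ⊗ₖ (a2 - c2) + (a1 - c1) ⊗ₖ (a2 + c2)
      = (a1 ⊗ₖ a2 - c1 ⊗ₖ c2) + (a1 ⊗ₖ a2 - c1 ⊗ₖ c2) := by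
    ext ⟨i, i'⟩ ⟨j, j'⟩
    simp only [Matrix.kroneckerMap_apply, Matrix.add_apply, Matrix.sub_apply]
    ring
  rw [hexp, frob_add_left, frob_sub_left] at hsum
  have hmid : frob (c1 ⊗ₖ c2) X ≤ frob (a1 ⊗ₖ a2) X := by linarith
  have hw1 : c1 = ∑ j, (z1 j + u1 j) • B1 j := by
    rw [hc1def, hJ1span, ← Finset.sum_add_distrib]
    exact Finset.sum_congr rfl fun j _ => by rw [add_smul]
  have hw2 : c2 = ∑ j, (z2 j + u2 j) • B2 j := by
    rw [hc2def, hJ2span, ← Finset.sum_add_distrib]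
    exact Finset.sum_congr rfl fun j _ => by rw [add_smul]
  have hJexp : frob (J1 ⊗ₖ J2) X = ∑ j, ∑ j', (u1 j * u2 j') * frob (B1 j ⊗ₖ B2 j') X := by
    rw [hJ1span, hJ2span]; exact frob_kron_sum u1 u2 B1 B2 X
  have hCexp : frob (c1 ⊗ₖ c2) X
      = ∑ j, ∑ j', ((z1 j + u1 j) * (z2 j' + u2 j')) * frob (B1 j ⊗ₖ B2 j') X := by
    rw [hw1, hw2]; exact frob_kron_sum _ _ B1 B2 X
  have hAexp : frob (a1 ⊗ₖ a2) X = ∑ j, ∑ j', (y1 j * y2 j') * frob (A1 j ⊗ₖ A2 j') X := by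
    rw [ha1def, ha2def]; exact frob_kron_sum y1 y2 A1 A2 X
  have low : frob (J1 ⊗ₖ J2) X ≤ frob (c1 ⊗ₖ c2) X := by
    rw [hJexp, hCexp]
    refine Finset.sum_le_sum fun j _ => Finset.sum_le_sum fun j' _ => ?_
    have hb := hXB j j'
    have h1' := hu1 j
    have h2' := hu2 j'
    have h3' := hz1 j
    have h4' := hz2 j'
    nlinarith [mul_nonneg (mul_nonneg h3' h4') hb, mul_nonneg (mul_nonneg h3' h2') hb,
      mul_nonneg (mul_nonneg h1' h4') hb]
  have high : frob (a1 ⊗ₖ a2) X ≤ (∑ j, y1 j * b1 j) * (∑ j, y2 j * b2 j) := by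
    rw [hAexp, Finset.sum_mul_sum]
    refine Finset.sum_le_sum fun j _ => Finset.sum_le_sum fun j' _ => ?_
    have := mul_le_mul_of_nonneg_left (hXA j j') (mul_nonneg (hy1 j) (hy2 j'))
    calc y1 j * y2 j' * frob (A1 j ⊗ₖ A2 j') X
        ≤ y1 j * y2 j' * (b1 j * b2 j') := this
      _ = y1 j * b1 j * (y2 j' * b2 j') := by ring
  linarith
end
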